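/- Let d ≥ 1 be an integer, let λ > 0 be a real, and set ν = ((d+1)·λ)^{1/(d+1)}. Then for every natural n with n^{d+1}·(ν − 1) ≥ (d/(d+1))·(n+1)^{d+1} and every natural m, it holds that λ·m^{d+1} − m·ν·(n+1)^d + n·ν·n^d ≥ n^{d+1}. (In the paper this is stated as: for d ≤ 5 and n ≥ 1154, the function f'(n) = ν·n^d with ν = ((d+1)·λ_d)^{1/(d+1)} is (λ_d, 0)-smooth with respect to h(n) = n^{d+1} for the appropriate constant λ_d = Ψ_d; the displayed condition on n is exactly the one established in its proof.) -/

import Mathlib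

open Real

/-- Young's inequality specialized: for `a b ≥ 0` and `1 ≤ d`,
`a * b^d ≤ a^(d+1)/(d+1) + d * b^(d+1)/(d+1)`. -/
lemma young_nat_aux (d : ℕ) (hd : 1 ≤ d) (a b : ℝ) (ha : 0 ≤ a) (hb : 0 ≤ b) :
    a * b ^ d ≤ a ^ (d + 1) / ((d : ℝ) + 1) + (d : ℝ) * b ^ (d + 1) / ((d : ℝ) + 1) := by
  have hD : (1 : ℝ) ≤ (d : ℝ) := by exact_mod_cast hd
  have hD0 : (0 : ℝ) < (d : ℝ) := lt_of_lt_of_le one_pos hD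
  have hpq : ((d : ℝ) + 1).HolderConjugate (((d : ℝ) + 1) / (d : ℝ)) := by
    rw [Real.holderConjugate_iff_eq_conjExponent (by linarith)]
    congr 1; ring
  have h := Real.young_inequality_of_nonneg (a := a) (b := b ^ d) ha (by positivity) hpq
  have h1 : a ^ ((d : ℝ) + 1) = a ^ (d + 1) := by
    rw [← Real.rpow_natCast a (d + 1)]; push_cast; ring_nf
  have h2 : (b ^ d) ^ (((d : ℝ) + 1) / (d : ℝ)) = b ^ (d + 1) := by
    rw [← Real.rpow_natCast b d, ← Real.rpow_mul hb, ← Real.rpow_natCast b (d + 1)]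
    congr 1
    field_simp
    push_cast; ring
  rw [h1, h2] at h
  calc a * b ^ d ≤ a ^ (d + 1) / ((d : ℝ) + 1) + b ^ (d + 1) / (((d : ℝ) + 1) / (d : ℝ)) := h
    _ = a ^ (d + 1) / ((d : ℝ) + 1) + (d : ℝ) * b ^ (d + 1) / ((d : ℝ) + 1) := by
        rw [div_div_eq_mul_div]; ring

/-- For `d ≥ 1`, `lam > 0` and `ν = ((d+1) * lam)^(1/(d+1))`, the taxed cost
function `f'(n) = ν * n^d` satisfies the per-resource `(lam, 0)`-smoothness condition with
respect to the social cost objective `h(n) = n^(d+1)` of the resource cost `f(n) = n^d`, for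
all loads `n` large enough that `n^(d+1) * (ν - 1) ≥ (d/(d+1)) * (n+1)^(d+1)`. -/
theorem smoothness_large_load_social_cost
    (d : ℕ) (hd : 1 ≤ d) (lam : ℝ) (hlam : 0 < lam)
    (ν : ℝ) (hν : ν = (((d : ℝ) + 1) * lam) ^ ((1 : ℝ) / ((d : ℝ) + 1)))
    (n : ℕ)
    (hn : (n : ℝ) ^ (d + 1) * (ν - 1) ≥
      ((d : ℝ) / ((d : ℝ) + 1)) * ((n : ℝ) + 1) ^ (d + 1)) :
    ∀ m : ℕ,
      lam * (m : ℝ) ^ (d + 1) - (m : ℝ) * ν * ((n : ℝ) + 1) ^ d + (n : ℝ) * ν * (n : ℝ) ^ d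
        ≥ (n : ℝ) ^ (d + 1) := by
  intro m
  have hD1 : (0 : ℝ) < (d : ℝ) + 1 := by positivity
  have hC : (0 : ℝ) < ((d : ℝ) + 1) * lam := by positivity
  have hν0 : 0 ≤ ν := by rw [hν]; positivity
  -- ν^(d+1) = (d+1) * lam
  have hpow : ν ^ (d + 1) = ((d : ℝ) + 1) * lam := by
    rw [hν, ← Real.rpow_natCast _ (d + 1), ← Real.rpow_mul hC.le]
    push_cast
    rw [one_div, inv_mul_cancel₀ hD1.ne']
    exact Real.rpow_one _
  -- Young's inequality with a = ν * m, b = n + 1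
  have hY := young_nat_aux d hd (ν * (m : ℝ)) ((n : ℝ) + 1) (by positivity) (by positivity)
  have hexp : (ν * (m : ℝ)) ^ (d + 1) = ((d : ℝ) + 1) * lam * (m : ℝ) ^ (d + 1) := by
    rw [mul_pow, hpow]
  rw [hexp] at hY
  have hY' : (m : ℝ) * ν * ((n : ℝ) + 1) ^ d
      ≤ lam * (m : ℝ) ^ (d + 1) + (d : ℝ) / ((d : ℝ) + 1) * ((n : ℝ) + 1) ^ (d + 1) := by
    have e1 : ((d : ℝ) + 1) * lam * (m : ℝ) ^ (d + 1) / ((d : ℝ) + 1)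
        = lam * (m : ℝ) ^ (d + 1) := by field_simp
    have e2 : (d : ℝ) * ((n : ℝ) + 1) ^ (d + 1) / ((d : ℝ) + 1)
        = (d : ℝ) / ((d : ℝ) + 1) * ((n : ℝ) + 1) ^ (d + 1) := by ring
    calc (m : ℝ) * ν * ((n : ℝ) + 1) ^ d = ν * (m : ℝ) * ((n : ℝ) + 1) ^ d := by ring
      _ ≤ _ := hY
      _ = _ := by rw [e1, e2]
  have hnn : (n : ℝ) * ν * (n : ℝ) ^ d = ν * (n : ℝ) ^ (d + 1) := by ring
  nlinarith [hn, hY']
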